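/- Let X be a Hausdorff topological space and G : [-1,1] → X a surjective continuous map with G(-1) ≠ G(1). Then there exists an injective continuous map j : [-1,1] → X with j(-1) = G(-1) and j(1) = G(1). -/

import Mathlib

open Set Filter Metric Topology

/-- A continuous flow on `M`. -/
def IsFlow {M : Type*} [TopologicalSpace M] (φ : ℝ × M → M) : Prop :=
  Continuous φ ∧ (∀ x, φ (0, x) = x) ∧ ∀ s t x, φ (s + t, x) = φ (s, φ (t, x))

/-- Orientation preserving homeomorphism of `ℝ`. -/
def IsRep (f : ℝ → ℝ) : Prop :=
  Continuous f ∧ Function.Bijective f ∧ StrictMono f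

/-- Element of `Rep(ε)`: all difference quotients within `ε` of `1`. -/
def IsRepE (ε : ℝ) (f : ℝ → ℝ) : Prop :=
  IsRep f ∧ ∀ a b : ℝ, b < a → |(f a - f b) / (a - b) - 1| < ε

/-- A `d`-pseudotrajectory of the flow `φ`. -/
def IsPseudo {M : Type*} [PseudoMetricSpace M] (φ : ℝ × M → M) (d : ℝ) (ξ : ℝ → M) : Prop :=
  ∀ t : ℝ, ∀ s ∈ Set.Icc (0:ℝ) 1, dist (ξ (t + s)) (φ (s, ξ t)) < d

/-- The standard shadowing property. -/
def StandardShadowing {M : Type*} [PseudoMetricSpace M] (φ : ℝ × M → M) : Prop :=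
  ∀ ε > 0, ∃ d > 0, ∀ ξ : ℝ → M, IsPseudo φ d ξ →
    ∃ x : M, ∃ h : ℝ → ℝ, IsRepE ε h ∧ ∀ t, dist (ξ t) (φ (h t, x)) < ε

/-- The oriented shadowing property. -/
def OrientedShadowing {M : Type*} [PseudoMetricSpace M] (φ : ℝ × M → M) : Prop :=
  ∀ ε > 0, ∃ d > 0, ∀ ξ : ℝ → M, IsPseudo φ d ξ →
    ∃ x : M, ∃ h : ℝ → ℝ, IsRep h ∧ ∀ t, dist (ξ t) (φ (h t, x)) < ε

/-- A singularity (fixed point) of the flow. -/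
def IsSingularity {M : Type*} (φ : ℝ × M → M) (p : M) : Prop :=
  ∀ t : ℝ, φ (t, p) = p

/-- A closed (periodic, non-fixed) orbit of the flow. -/
def IsClosedOrbit {M : Type*} (φ : ℝ × M → M) (Λ : Set M) : Prop :=
  ∃ (x₀ : M) (T : ℝ), 0 < T ∧ φ (T, x₀) = x₀ ∧ (∀ t ∈ Set.Ioo 0 T, φ (t, x₀) ≠ x₀) ∧
    Λ = Set.range (fun t : ℝ => φ (t, x₀))

/-- A critical element: a singularity or a closed orbit. -/
def IsCriticalElement {M : Type*} (φ : ℝ × M → M) (Λ : Set M) : Prop :=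
  (∃ p, IsSingularity φ p ∧ Λ = {p}) ∨ IsClosedOrbit φ Λ

/-- A nonwandering point of the flow. -/
def IsNonWandering {M : Type*} [TopologicalSpace M] (φ : ℝ × M → M) (x : M) : Prop :=
  ∀ V : Set M, IsOpen V → x ∈ V → ∀ T > 0, ∃ t > T, ∃ y ∈ V, φ (t, y) ∈ V

/-- The ω-limit set of a point. -/
def OmegaLim {M : Type*} [PseudoMetricSpace M] (φ : ℝ × M → M) (x : M) : Set M :=
  {y | ∀ ε > 0, ∀ T : ℝ, ∃ t > T, dist (φ (t, x)) y < ε}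

/-- The α-limit set of a point. -/
def AlphaLim {M : Type*} [PseudoMetricSpace M] (φ : ℝ × M → M) (x : M) : Set M :=
  {y | ∀ ε > 0, ∀ T : ℝ, ∃ t < T, dist (φ (t, x)) y < ε}

/-- Asymptotic stability of a compact invariant set `K`. -/
def IsAsympStable {M : Type*} [MetricSpace M] (φ : ℝ × M → M) (K : Set M) : Prop :=
  ∀ V : Set M, IsOpen V → K ⊆ V → ∃ U : Set M, IsOpen U ∧ K ⊆ U ∧ ∀ x ∈ U,
    (∀ t ≥ (0:ℝ), φ (t, x) ∈ V) ∧
    Tendsto (fun t => Metric.infDist (φ (t, x)) K) atTop (nhds 0)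

/-- Backward asymptotic stability of a compact invariant set `K`. -/
def IsBackAsympStable {M : Type*} [MetricSpace M] (φ : ℝ × M → M) (K : Set M) : Prop :=
  ∀ V : Set M, IsOpen V → K ⊆ V → ∃ U : Set M, IsOpen U ∧ K ⊆ U ∧ ∀ x ∈ U,
    (∀ t ≤ (0:ℝ), φ (t, x) ∈ V) ∧
    Tendsto (fun t => Metric.infDist (φ (t, x)) K) atBot (nhds 0)

open MeasureTheory
open scoped ENNReal

/-- binary digit of `y` at position `n` -/
noncomputable def bdig (y : ℝ) (n : ℕ) : Bool := decide (⌊y * 2 ^ (n+1)⌋ - 2 * ⌊y * 2 ^ n⌋ = 1)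

lemma bdig_aux (y : ℝ) (n : ℕ) :
    ⌊y * 2 ^ (n+1)⌋ - 2 * ⌊y * 2 ^ n⌋ = 0 ∨ ⌊y * 2 ^ (n+1)⌋ - 2 * ⌊y * 2 ^ n⌋ = 1 := by
  have h1 : (2:ℤ) * ⌊y * 2 ^ n⌋ ≤ ⌊y * 2 ^ (n+1)⌋ := by
    rw [Int.le_floor]
    push_cast
    have := Int.floor_le (y * 2 ^ n)
    rw [pow_succ]
    nlinarith [this]
  have h2 : ⌊y * 2 ^ (n+1)⌋ ≤ 2 * ⌊y * 2 ^ n⌋ + 1 := by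
    rw [Int.floor_le_iff]
    push_cast
    have := Int.lt_floor_add_one (y * 2 ^ n)
    rw [pow_succ]
    nlinarith [this]
  omega

lemma measurable_bdig : Measurable bdig := by
  rw [measurable_pi_iff]
  intro n
  have h : Measurable fun y : ℝ => ⌊y * 2 ^ (n+1)⌋ - 2 * ⌊y * 2 ^ n⌋ :=
    ((Int.measurable_floor.comp (measurable_id.mul_const _)).sub
      ((Int.measurable_floor.comp (measurable_id.mul_const _)).const_mul 2))
  exact (measurable_from_top (f := fun z : ℤ => decide (z = 1))).comp h

lemma floor_eq_of_bdig_eq {x y : ℝ} (hx : x ∈ Ico (0:ℝ) 1) (hy : y ∈ Ico (0:ℝ) 1)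
    (h : bdig x = bdig y) : ∀ N : ℕ, ⌊x * 2 ^ N⌋ = ⌊y * 2 ^ N⌋ := by
  intro N
  induction N with
  | zero =>
    simp only [pow_zero, mul_one]
    rw [Int.floor_eq_zero_iff.2 (by exact ⟨hx.1, hx.2⟩), Int.floor_eq_zero_iff.2 ⟨hy.1, hy.2⟩]
  | succ n ih =>
    have hdx := bdig_aux x n
    have hdy := bdig_aux y n
    have hb : bdig x n = bdig y n := by rw [h]
    unfold bdig at hb
    rcases hdx with hx0 | hx0 <;> rcases hdy with hy0' | hy0' <;> simp [hx0, hy0'] at hb ⊢ <;> omega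

lemma volume_bdig_fiber (b : ℕ → Bool) : volume (bdig ⁻¹' {b} ∩ Ico (0:ℝ) 1) = 0 := by
  rcases eq_empty_or_nonempty (bdig ⁻¹' {b} ∩ Ico (0:ℝ) 1) with he | ⟨y0, hy0b, hy0⟩
  · simp [he]
  have key : ∀ N : ℕ, bdig ⁻¹' {b} ∩ Ico (0:ℝ) 1 ⊆
      Ico ((⌊y0 * 2 ^ N⌋ : ℝ) / 2 ^ N) ((⌊y0 * 2 ^ N⌋ + 1 : ℝ) / 2 ^ N) := by
    intro N z ⟨hzb, hz⟩
    have hz' : ⌊z * 2 ^ N⌋ = ⌊y0 * 2 ^ N⌋ :=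
      floor_eq_of_bdig_eq hz hy0 (by simp only [mem_preimage, mem_singleton_iff] at hzb hy0b; rw [hzb, hy0b]) N
    have h1 : (⌊y0 * 2 ^ N⌋ : ℝ) ≤ z * 2 ^ N := by rw [← hz']; exact Int.floor_le _
    have h2 : z * 2 ^ N < ⌊y0 * 2 ^ N⌋ + 1 := by rw [← hz']; exact Int.lt_floor_add_one _
    have hp : (0:ℝ) < 2 ^ N := by positivity
    constructor
    · rw [div_le_iff₀ hp]; linarith
    · rw [lt_div_iff₀ hp]; linarith
  have hle : ∀ N : ℕ, volume (bdig ⁻¹' {b} ∩ Ico (0:ℝ) 1) ≤ ENNReal.ofReal ((2 ^ N : ℝ)⁻¹) := by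
    intro N
    refine le_trans (measure_mono (key N)) ?_
    rw [Real.volume_Ico]
    apply le_of_eq
    congr 1
    field_simp
    ring
  have htend : Tendsto (fun N : ℕ => ENNReal.ofReal ((2 ^ N : ℝ)⁻¹)) atTop (𝓝 0) := by
    rw [show (0:ℝ≥0∞) = ENNReal.ofReal 0 by simp]
    apply Tendsto.comp (ENNReal.continuous_ofReal.tendsto 0)
    simp_rw [← inv_pow]
    exact tendsto_pow_atTop_nhds_zero_of_lt_one (by norm_num) (by norm_num)
  exact le_antisymm (ge_of_tendsto' htend hle) zero_le

/-- An atomless probability-like measure concentrated on a nonempty perfect subset of `ℝ`. -/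
lemma exists_measure_of_perfect {K : Set ℝ} (hK : Perfect K) (hne : K.Nonempty) :
    ∃ μ : Measure ℝ, μ Set.univ = 1 ∧ μ Kᶜ = 0 ∧ ∀ x, μ {x} = 0 := by
  obtain ⟨g, hgK, hgc, hgi⟩ := hK.exists_nat_bool_injection hne
  have hgm : Measurable (g ∘ bdig) := (hgc.measurable).comp measurable_bdig
  refine ⟨Measure.map (g ∘ bdig) (volume.restrict (Ico (0:ℝ) 1)), ?_, ?_, ?_⟩
  · rw [Measure.map_apply hgm MeasurableSet.univ]
    simp [Real.volume_Ico]
  · rw [Measure.map_apply hgm hK.closed.measurableSet.compl]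
    have : (g ∘ bdig) ⁻¹' Kᶜ = ∅ := by
      ext y; simp only [mem_preimage, mem_compl_iff, mem_empty_iff_false, iff_false, not_not]
      exact hgK ⟨bdig y, rfl⟩
    simp [this]
  · intro x
    rw [Measure.map_apply hgm (measurableSet_singleton x)]
    rw [Measure.restrict_apply (hgm (measurableSet_singleton x))]
    rcases em (∃ b, g b = x) with ⟨b, hb⟩ | hnb
    · have hsub : (g ∘ bdig) ⁻¹' {x} ∩ Ico (0:ℝ) 1 ⊆ bdig ⁻¹' {b} ∩ Ico (0:ℝ) 1 := by
        rintro y ⟨hy1, hy2⟩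
        refine ⟨?_, hy2⟩
        simp only [mem_preimage, mem_singleton_iff] at hy1 ⊢
        exact hgi (show g (bdig y) = g b by rw [show g (bdig y) = (g ∘ bdig) y from rfl, hy1, hb])
      exact le_antisymm (le_trans (measure_mono hsub) (le_of_eq (volume_bdig_fiber b))) zero_le
    · have : (g ∘ bdig) ⁻¹' {x} = ∅ := by
        ext y; simp only [mem_preimage, mem_singleton_iff, mem_empty_iff_false, iff_false]
        exact fun h => hnb ⟨bdig y, h⟩
      simp [this]

section cdf
variable (μ : Measure ℝ) [IsFiniteMeasure μ]

lemma cdf_mono : Monotone (fun t => (μ (Iic t)).toReal) := fun s t hst =>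
  ENNReal.toReal_mono (measure_ne_top μ _) (measure_mono (Iic_subset_Iic.2 hst))

lemma cdf_diff {s t : ℝ} (hst : s ≤ t) :
    (μ (Iic t)).toReal - (μ (Iic s)).toReal = (μ (Ioc s t)).toReal := by
  have h : μ (Iic t) = μ (Iic s) + μ (Ioc s t) := by
    rw [← Iic_union_Ioc_eq_Iic hst]
    exact measure_union (Iic_disjoint_Ioc le_rfl) measurableSet_Ioc
  rw [h, ENNReal.toReal_add (measure_ne_top μ _) (measure_ne_top μ _)]
  ring

lemma cdf_cont (h0 : ∀ x, μ {x} = 0) : Continuous (fun t => (μ (Iic t)).toReal) := by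
  rw [continuous_iff_continuousAt]
  intro x
  rw [Metric.continuousAt_iff]
  intro ε hε
  set s : ℕ → Set ℝ := fun n => Ioc (x - 1/(n+1)) (x + 1/(n+1)) with hs
  have hsm : ∀ n, NullMeasurableSet (s n) μ := fun n => measurableSet_Ioc.nullMeasurableSet
  have hsa : Antitone s := by
    intro n m hnm
    have hc : ((n:ℝ)+1) ≤ (m:ℝ)+1 := by exact_mod_cast Nat.succ_le_succ hnm
    have h1 : (1:ℝ)/(m+1) ≤ 1/(n+1) :=
      div_le_div_of_nonneg_left (by norm_num) (by positivity) hc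
    apply Ioc_subset_Ioc <;> linarith
  have hsi : ⋂ n, s n = {x} := by
    ext y
    simp only [mem_iInter, mem_singleton_iff, hs, mem_Ioc]
    constructor
    · intro h
      have h1 : y ≤ x := by
        refine le_of_forall_pos_le_add fun δ hδ => ?_
        obtain ⟨n, hn⟩ := exists_nat_one_div_lt hδ
        exact le_trans (h n).2 (by push_cast; linarith [hn])
      have h2 : x ≤ y := by
        refine le_of_forall_pos_le_add fun δ hδ => ?_
        obtain ⟨n, hn⟩ := exists_nat_one_div_lt hδ
        have := (h n).1
        push_cast at this ⊢
        linarith [hn]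
      linarith
    · rintro rfl
      intro n
      have : (0:ℝ) < 1/(n+1) := by positivity
      exact ⟨by linarith, by linarith⟩
  have htend : Tendsto (fun n => μ (s n)) atTop (𝓝 (μ {x})) := by
    have := tendsto_measure_iInter_atTop hsm hsa ⟨0, measure_ne_top μ _⟩
    rwa [hsi] at this
  rw [h0 x] at htend
  have hev : ∀ᶠ n in atTop, μ (s n) < ENNReal.ofReal ε :=
    htend.eventually_lt_const (by simp [hε])
  obtain ⟨N, hN⟩ := hev.exists
  refine ⟨1/(N+1), by positivity, fun y hy => ?_⟩
  rw [Real.dist_eq] at hy ⊢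
  have key : ∀ a b : ℝ, a ≤ b → x - 1/(N+1) ≤ a → b ≤ x + 1/(N+1) →
      (μ (Iic b)).toReal - (μ (Iic a)).toReal < ε := by
    intro a b hab ha hb
    rw [cdf_diff μ hab]
    have hm : μ (Ioc a b) ≤ μ (s N) := measure_mono (Ioc_subset_Ioc ha hb)
    calc (μ (Ioc a b)).toReal ≤ (μ (s N)).toReal :=
          ENNReal.toReal_mono (measure_ne_top μ _) hm
      _ < ε := by
          have := (ENNReal.toReal_lt_toReal (measure_ne_top μ _) ENNReal.ofReal_ne_top).2 hN
          rwa [ENNReal.toReal_ofReal hε.le] at this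
  rcases le_or_gt y x with hyx | hyx
  · have h1 : x - 1/(N+1) ≤ y := by
      rw [abs_sub_comm] at hy
      have := abs_lt.1 hy
      linarith [this.2]
    have := key y x hyx h1 (by linarith [(by positivity : (0:ℝ) < 1/((N:ℝ)+1))])
    rw [abs_sub_comm, abs_of_nonneg (by linarith [cdf_mono μ hyx] : (0:ℝ) ≤ (μ (Iic x)).toReal - (μ (Iic y)).toReal)]
    exact this
  · have h2 : y ≤ x + 1/(N+1) := by
      have := abs_lt.1 hy
      linarith [this.2]
    have := key x y hyx.le (by linarith [(by positivity : (0:ℝ) < 1/((N:ℝ)+1))]) h2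
    rw [abs_of_nonneg (by linarith [cdf_mono μ hyx.le] : (0:ℝ) ≤ (μ (Iic y)).toReal - (μ (Iic x)).toReal)]
    exact this
end cdf

/-- arcs in Hausdorff continuous images of an interval. -/
theorem arc_in_peano_image {X : Type*} [TopologicalSpace X] [T2Space X]
    (G : ℝ → X) (hGc : ContinuousOn G (Set.Icc (-1 : ℝ) 1))
    (hGs : ∀ x : X, ∃ t ∈ Set.Icc (-1 : ℝ) 1, G t = x)
    (hne : G (-1) ≠ G 1) :
    ∃ j : ℝ → X, ContinuousOn j (Set.Icc (-1 : ℝ) 1) ∧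
      Set.InjOn j (Set.Icc (-1 : ℝ) 1) ∧ j (-1) = G (-1) ∧ j 1 = G 1 := by
  classical
  -- clamp G to a globally continuous function f
  set cl : ℝ → ℝ := fun t => max (-1) (min 1 t) with hcl
  have hcl_mem : ∀ t, cl t ∈ Icc (-1:ℝ) 1 := fun t =>
    ⟨le_max_left _ _, max_le (by norm_num) (min_le_left _ _)⟩
  have hcl_id : ∀ t ∈ Icc (-1:ℝ) 1, cl t = t := fun t ht => by
    simp only [hcl]; rw [min_eq_right ht.2, max_eq_right ht.1]
  set f : ℝ → X := fun t => G (cl t) with hf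
  have hfc : Continuous f :=
    hGc.comp_continuous (continuous_const.max (continuous_const.min continuous_id)) hcl_mem
  have hfeq : ∀ t ∈ Icc (-1:ℝ) 1, f t = G t := fun t ht => by
    simp only [hf]; rw [hcl_id t ht]
  have hfm1 : f (-1) = G (-1) := hfeq _ (by norm_num)
  have hfp1 : f 1 = G 1 := hfeq _ (by norm_num)
  have hfne : f (-1) ≠ f 1 := by rw [hfm1, hfp1]; exact hne
  -- the family S
  set S : Set (Set ℝ) := {A | A ⊆ Icc (-1) 1 ∧ IsClosed A ∧ (-1:ℝ) ∈ A ∧ (1:ℝ) ∈ A ∧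
    ∀ u ∈ A, ∀ v ∈ A, u < v → Ioo u v ∩ A = ∅ → f u = f v} with hS
  have hIccS : Icc (-1:ℝ) 1 ∈ S := by
    refine ⟨subset_rfl, isClosed_Icc, by norm_num, by norm_num, ?_⟩
    intro u hu v hv huv hgap
    exfalso
    have : (u+v)/2 ∈ Ioo u v ∩ Icc (-1:ℝ) 1 :=
      ⟨⟨by linarith, by linarith⟩, by constructor <;> [linarith [hu.1, hv.1]; linarith [hu.2, hv.2]]⟩
    rw [hgap] at this; exact this
  -- Zorn
  have hZorn : ∃ A, Minimal (· ∈ S) A := by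
    apply zorn_superset
    intro c hcS hchain
    rcases c.eq_empty_or_nonempty with rfl | hcne
    · exact ⟨Icc (-1) 1, hIccS, by simp⟩
    obtain ⟨B0, hB0⟩ := hcne
    refine ⟨⋂₀ c, ⟨?_, ?_, ?_, ?_, ?_⟩, fun s hs => sInter_subset_of_mem hs⟩
    · exact (sInter_subset_of_mem hB0).trans (hcS hB0).1
    · exact isClosed_sInter (fun B hB => (hcS hB).2.1)
    · exact mem_sInter.2 fun B hB => (hcS hB).2.2.1
    · exact mem_sInter.2 fun B hB => (hcS hB).2.2.2.1
    intro u hu v hv huv hgap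
    have claim : ∀ ε : ℝ, 0 < ε → ε ≤ (v-u)/2 →
        ∃ a b : ℝ, a ∈ Icc u (u+ε) ∧ b ∈ Icc (v-ε) v ∧ f a = f b := by
      intro ε hε hεle
      have huv2 : u + ε ≤ (u+v)/2 := by linarith
      have huv3 : (u+v)/2 ≤ v - ε := by linarith
      have hexB : ∃ B ∈ c, B ∩ Icc (u+ε) (v-ε) = ∅ := by
        by_contra hcon
        push_neg at hcon
        haveI : Nonempty c := ⟨⟨B0, hB0⟩⟩
        have hne' : ∀ B : c, ((B : Set ℝ) ∩ Icc (u+ε) (v-ε)).Nonempty := fun B =>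
          hcon B B.2
        have hdir : Directed (· ⊇ ·) (fun B : c => (B : Set ℝ) ∩ Icc (u+ε) (v-ε)) := by
          intro B1 B2
          rcases hchain.total B1.2 B2.2 with h | h
          · exact ⟨B1, inter_subset_inter_left _ subset_rfl, inter_subset_inter_left _ h⟩
          · exact ⟨B2, inter_subset_inter_left _ h, inter_subset_inter_left _ subset_rfl⟩
        have hcl' : ∀ B : c, IsClosed ((B : Set ℝ) ∩ Icc (u+ε) (v-ε)) := fun B =>
          (hcS B.2).2.1.inter isClosed_Icc
        have hcpt : ∀ B : c, IsCompact ((B : Set ℝ) ∩ Icc (u+ε) (v-ε)) := fun B =>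
          isCompact_Icc.of_isClosed_subset (hcl' B) inter_subset_right
        obtain ⟨x, hx⟩ := IsCompact.nonempty_iInter_of_directed_nonempty_isCompact_isClosed
          _ hdir hne' hcpt hcl'
        rw [mem_iInter] at hx
        have hxc : x ∈ ⋂₀ c := mem_sInter.2 fun B hB => (hx ⟨B, hB⟩).1
        have hxI : x ∈ Icc (u+ε) (v-ε) := (hx ⟨B0, hB0⟩).2
        have : x ∈ Ioo u v ∩ ⋂₀ c :=
          ⟨⟨lt_of_lt_of_le (by linarith) hxI.1, lt_of_le_of_lt hxI.2 (by linarith)⟩, hxc⟩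
        rw [hgap] at this; exact this
      obtain ⟨B, hBc, hBe⟩ := hexB
      have hBS := hcS hBc
      have hBcl : IsClosed B := hBS.2.1
      have huB : u ∈ B := sInter_subset_of_mem hBc hu
      have hvB : v ∈ B := sInter_subset_of_mem hBc hv
      have hm : u ≤ (u+v)/2 := by linarith
      have hm' : (u+v)/2 ≤ v := by linarith
      -- a : sup of B before midpoint
      have hacpt : IsCompact (B ∩ Icc u ((u+v)/2)) :=
        isCompact_Icc.of_isClosed_subset (hBcl.inter isClosed_Icc) inter_subset_right
      have hane : (B ∩ Icc u ((u+v)/2)).Nonempty := ⟨u, huB, le_rfl, hm⟩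
      set a : ℝ := sSup (B ∩ Icc u ((u+v)/2)) with ha
      have hamem : a ∈ B ∩ Icc u ((u+v)/2) := hacpt.sSup_mem hane
      have haε : a ≤ u + ε := by
        by_contra h
        push_neg at h
        have : a ∈ B ∩ Icc (u+ε) (v-ε) := ⟨hamem.1, h.le, le_trans hamem.2.2 huv3⟩
        rw [hBe] at this; exact this
      -- b : inf of B after midpoint
      have hbcpt : IsCompact (B ∩ Icc ((u+v)/2) v) :=
        isCompact_Icc.of_isClosed_subset (hBcl.inter isClosed_Icc) inter_subset_right
      have hbne : (B ∩ Icc ((u+v)/2) v).Nonempty := ⟨v, hvB, hm', le_rfl⟩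
      set b : ℝ := sInf (B ∩ Icc ((u+v)/2) v) with hb
      have hbmem : b ∈ B ∩ Icc ((u+v)/2) v := hbcpt.sInf_mem hbne
      have hbε : v - ε ≤ b := by
        by_contra h
        push_neg at h
        have : b ∈ B ∩ Icc (u+ε) (v-ε) := ⟨hbmem.1, le_trans huv2 hbmem.2.1, h.le⟩
        rw [hBe] at this; exact this
      have hab : a < b := by
        by_contra h
        push_neg at h
        have h1 : a = (u+v)/2 := le_antisymm hamem.2.2 (le_trans hbmem.2.1 h)
        have : (u+v)/2 ∈ B ∩ Icc (u+ε) (v-ε) := ⟨h1 ▸ hamem.1, huv2, huv3⟩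
        rw [hBe] at this; exact this
      have hgapB : Ioo a b ∩ B = ∅ := by
        rw [eq_empty_iff_forall_notMem]
        rintro w ⟨hw, hwB⟩
        rcases le_or_gt w ((u+v)/2) with h | h
        · have : w ≤ a := le_csSup hacpt.bddAbove ⟨hwB, le_trans hamem.2.1 hw.1.le, h⟩
          linarith [hw.1]
        · have : b ≤ w := csInf_le hbcpt.bddBelow ⟨hwB, h.le, le_trans hw.2.le hbmem.2.2⟩
          linarith [hw.2]
      exact ⟨a, b, ⟨hamem.2.1, haε⟩, ⟨hbε, hbmem.2.2⟩,
        hBS.2.2.2.2 a hamem.1 b hbmem.1 hab hgapB⟩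
    -- sequences
    have hεn : ∀ n : ℕ, 0 < (v-u)/2 * (1/(n+1)) ∧ (v-u)/2 * (1/(n+1)) ≤ (v-u)/2 := by
      intro n
      have h1 : (0:ℝ) < 1/(n+1) := by positivity
      have h2 : (1:ℝ)/(n+1) ≤ 1 := by
        rw [div_le_one (by positivity)]
        have : (0:ℝ) ≤ n := Nat.cast_nonneg n
        linarith
      constructor
      · have : (0:ℝ) < (v-u)/2 := by linarith
        positivity
      · nlinarith [huv]
    choose aa bb haa hbb hfab using fun n : ℕ =>
      claim ((v-u)/2 * (1/(n+1))) (hεn n).1 (hεn n).2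
    have hlim : Tendsto (fun n : ℕ => (1:ℝ)/(n+1)) atTop (𝓝 0) :=
      tendsto_one_div_add_atTop_nhds_zero_nat
    have hatend : Tendsto aa atTop (𝓝 u) := by
      have h0 : Tendsto (fun n : ℕ => u + (v-u)/2 * (1/(n+1))) atTop (𝓝 u) := by
        have := (hlim.const_mul ((v-u)/2)).const_add u
        simpa using this
      exact tendsto_of_tendsto_of_tendsto_of_le_of_le tendsto_const_nhds h0
        (fun n => (haa n).1) (fun n => (haa n).2)
    have hbtend : Tendsto bb atTop (𝓝 v) := by
      have h0 : Tendsto (fun n : ℕ => v - (v-u)/2 * (1/(n+1))) atTop (𝓝 v) := by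
        have := ((hlim.const_mul ((v-u)/2)).neg.const_add v)
        simp only [mul_zero, neg_zero, add_zero] at this
        simpa [sub_eq_add_neg] using this
      exact tendsto_of_tendsto_of_tendsto_of_le_of_le h0 tendsto_const_nhds
        (fun n => (hbb n).1) (fun n => (hbb n).2)
    have h1 : Tendsto (fun n => f (aa n)) atTop (𝓝 (f u)) :=
      (hfc.continuousAt.tendsto).comp hatend
    have h2 : Tendsto (fun n => f (aa n)) atTop (𝓝 (f v)) := by
      have := (hfc.continuousAt.tendsto).comp hbtend
      convert this using 2 with n
      exact hfab n
    exact tendsto_nhds_unique h1 h2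
  obtain ⟨A, hAmin⟩ := hZorn
  obtain ⟨hAI, hAcl, hAm1, hAp1, hAgap⟩ := hAmin.prop
  have hAcpt : IsCompact A := isCompact_Icc.of_isClosed_subset hAcl hAI
  -- minimality consequence P1
  have P1 : ∀ s ∈ A, ∀ t ∈ A, s < t → f s = f t → Ioo s t ∩ A = ∅ := by
    intro s hs t ht hst hfst
    have hsA' : s ∉ Ioo s t := fun h => lt_irrefl s h.1
    have htA' : t ∉ Ioo s t := fun h => lt_irrefl t h.2
    have hAS' : A \ Ioo s t ∈ S := by
      refine ⟨(diff_subset).trans hAI, hAcl.sdiff isOpen_Ioo, ⟨hAm1, ?_⟩, ⟨hAp1, ?_⟩, ?_⟩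
      · intro h; exact absurd (hAI hs).1 (not_le.2 h.1)
      · intro h; exact absurd (hAI ht).2 (not_le.2 h.2)
      intro u hu v hv huv hgap
      have hsmem : s ∈ A \ Ioo s t := ⟨hs, hsA'⟩
      have htmem : t ∈ A \ Ioo s t := ⟨ht, htA'⟩
      have hsout : s ∉ Ioo u v := fun h => by
        have : s ∈ Ioo u v ∩ (A \ Ioo s t) := ⟨h, hsmem⟩
        rw [hgap] at this; exact this
      have htout : t ∉ Ioo u v := fun h => by
        have : t ∈ Ioo u v ∩ (A \ Ioo s t) := ⟨h, htmem⟩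
        rw [hgap] at this; exact this
      simp only [mem_Ioo, not_and, not_lt] at hsout htout
      rcases le_or_gt v s with hvs | hsv
      · -- gap entirely left of s : gap of A
        refine hAgap u hu.1 v hv.1 huv ?_
        rw [eq_empty_iff_forall_notMem]
        rintro w ⟨hw, hwA⟩
        have hwt : w ∉ Ioo s t := fun h => absurd hvs (not_le.2 (lt_trans h.1 hw.2))
        have : w ∈ Ioo u v ∩ (A \ Ioo s t) := ⟨hw, hwA, hwt⟩
        rw [hgap] at this; exact this
      rcases le_or_gt t u with htu | hut
      · -- gap entirely right of t
        refine hAgap u hu.1 v hv.1 huv ?_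
        rw [eq_empty_iff_forall_notMem]
        rintro w ⟨hw, hwA⟩
        have hwt : w ∉ Ioo s t := fun h => absurd h.2 (not_lt.2 (le_trans htu hw.1.le))
        have : w ∈ Ioo u v ∩ (A \ Ioo s t) := ⟨hw, hwA, hwt⟩
        rw [hgap] at this; exact this
      -- middle case : u = s, v = t
      have hsu : s ≤ u := by
        rcases lt_or_ge u s with h | h
        · -- u < s, then s < v would make s ∈ Ioo u v
          have := hsout h
          -- v ≤ s contradicts hsv
          linarith
        · exact h
      have hvt : v ≤ t := by
        rcases lt_or_ge t v with h | h
        · linarith [htout hut]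
        · exact h
      have hue : u = s := by
        have hu2 : u ∉ Ioo s t := hu.2
        simp only [mem_Ioo, not_and, not_lt] at hu2
        rcases eq_or_lt_of_le hsu with h | h
        · exact h.symm
        · have := hu2 h
          linarith
      have hve : v = t := by
        have hv2 : v ∉ Ioo s t := hv.2
        simp only [mem_Ioo, not_and, not_lt] at hv2
        rcases eq_or_lt_of_le hvt with h | h
        · exact h
        · have : v ≤ s := by
            by_contra hcon
            push_neg at hcon
            exact absurd h (not_lt.2 (hv2 hcon))
          linarith
      rw [hue, hve]
      exact hfst
    have hsubset : A \ Ioo s t ⊆ A := diff_subset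
    have := hAmin.2 hAS' hsubset
    rw [eq_empty_iff_forall_notMem]
    rintro w ⟨hw1, hw2⟩
    exact (this hw2).2 hw1
  -- non-endpoint points accumulate: P2
  have P2 : ∀ a ∈ A, -1 < a → a < 1 → AccPt a (𝓟 A) := by
    intro a ha ham1 hap1
    rw [accPt_iff_nhds]
    by_contra hcon
    push_neg at hcon
    obtain ⟨U, hU, hUa⟩ := hcon
    obtain ⟨ε0, hε0, hball⟩ := Metric.mem_nhds_iff.1 hU
    -- all points of A within ε of a equal a
    have hiso : ∀ ε > 0, ε ≤ ε0 → ∀ b ∈ A, |b - a| < ε → b = a := by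
      intro ε hε hεle b hb hba
      by_contra hbne
      exact hbne (hUa b ⟨hball (by rw [Metric.mem_ball, Real.dist_eq]; linarith), hb⟩)
    set ε : ℝ := min ε0 (min (a+1) (1-a)) with hε
    have hεpos : 0 < ε := lt_min hε0 (lt_min (by linarith) (by linarith))
    have hεle : ε ≤ ε0 := min_le_left _ _
    have hεa1 : ε ≤ a + 1 := le_trans (min_le_right _ _) (min_le_left _ _)
    have hεa2 : ε ≤ 1 - a := le_trans (min_le_right _ _) (min_le_right _ _)
    have hiso' : ∀ b ∈ A, |b - a| < ε → b = a := fun b hb hba => hiso ε hεpos hεle b hb hba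
    -- u : last point of A before a
    have hUne : (A ∩ Iic (a - ε)).Nonempty := ⟨-1, hAm1, by simp only [mem_Iic]; linarith⟩
    have hUcpt : IsCompact (A ∩ Iic (a - ε)) := hAcpt.inter_right isClosed_Iic
    set u : ℝ := sSup (A ∩ Iic (a - ε)) with hu
    have humem : u ∈ A ∩ Iic (a - ε) := hUcpt.sSup_mem hUne
    have hua : u < a := lt_of_le_of_lt humem.2 (by linarith)
    have hgap1 : Ioo u a ∩ A = ∅ := by
      rw [eq_empty_iff_forall_notMem]
      rintro w ⟨hw, hwA⟩
      rcases le_or_gt w (a - ε) with h | h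
      · exact absurd (le_csSup hUcpt.bddAbove ⟨hwA, h⟩) (not_le.2 hw.1)
      · have : w = a := hiso' w hwA (abs_lt.2 ⟨by linarith, by linarith [hw.2]⟩)
        rw [this] at hw; exact lt_irrefl a hw.2
    have hfua : f u = f a := hAgap u humem.1 a ha hua hgap1
    -- v : first point of A after a
    have hVne : (A ∩ Ici (a + ε)).Nonempty := ⟨1, hAp1, by simp only [mem_Ici]; linarith⟩
    have hVcpt : IsCompact (A ∩ Ici (a + ε)) := hAcpt.inter_right isClosed_Ici
    set v : ℝ := sInf (A ∩ Ici (a + ε)) with hv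
    have hvmem : v ∈ A ∩ Ici (a + ε) := hVcpt.sInf_mem hVne
    have hav : a < v := lt_of_lt_of_le (by linarith) hvmem.2
    have hgap2 : Ioo a v ∩ A = ∅ := by
      rw [eq_empty_iff_forall_notMem]
      rintro w ⟨hw, hwA⟩
      rcases le_or_gt (a + ε) w with h | h
      · exact absurd (csInf_le hVcpt.bddBelow ⟨hwA, h⟩) (not_le.2 hw.2)
      · have : w = a := hiso' w hwA (abs_lt.2 ⟨by linarith [hw.1], by linarith⟩)
        rw [this] at hw; exact lt_irrefl a hw.1
    have hfav : f a = f v := hAgap a ha v hvmem.1 hav hgap2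
    have := P1 u humem.1 v hvmem.1 (lt_trans hua hav) (hfua.trans hfav)
    rw [eq_empty_iff_forall_notMem] at this
    exact this a ⟨⟨hua, hav⟩, ha⟩
  -- the measure
  have hμ : ∃ μ : Measure ℝ, IsFiniteMeasure μ ∧ (∀ x, μ {x} = 0) ∧ μ Aᶜ = 0 ∧
      μ (Iic (-1:ℝ)) = 0 ∧
      (∀ s t : ℝ, -1 ≤ s → t ≤ 1 → (Ioo s t ∩ A).Nonempty → 0 < μ (Ioo s t)) := by
    obtain ⟨e, he⟩ := exists_surjective_nat (ℚ × ℚ)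
    set p : ℕ → ℝ := fun n => ((e n).1 : ℝ) with hp
    set q : ℕ → ℝ := fun n => ((e n).2 : ℝ) with hq
    set A' : Set ℝ := {x ∈ A | AccPt x (𝓟 A)} with hA'
    set Sn : ℕ → Set ℝ := fun n => A' ∩ Ioo (p n) (q n) with hSn
    set good : ℕ → Prop := fun n => -1 < p n ∧ q n < 1 ∧ (Sn n).Nonempty with hgood
    have hperf : ∀ n, good n → Perfect (closure (Sn n)) := by
      intro n hg
      apply Preperfect.perfect_closure
      intro x hx
      rw [accPt_iff_nhds]
      intro U hU
      have hxIoo : x ∈ Ioo (p n) (q n) := hx.2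
      have hW : U ∩ Ioo (p n) (q n) ∈ 𝓝 x := inter_mem hU (isOpen_Ioo.mem_nhds hxIoo)
      obtain ⟨y, hyW, hyne⟩ := accPt_iff_nhds.1 hx.1.2 _ hW
      have hyA : y ∈ A := hyW.2
      have hyIoo : y ∈ Ioo (p n) (q n) := hyW.1.2
      have hy1 : -1 < y := lt_trans hg.1 hyIoo.1
      have hy2 : y < 1 := lt_trans hyIoo.2 hg.2.1
      exact ⟨y, ⟨hyW.1.1, ⟨hyA, P2 y hyA hy1 hy2⟩, hyIoo⟩, hyne⟩
    have hsubA : ∀ n, closure (Sn n) ⊆ A :=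
      fun n => closure_minimal (fun x hx => hx.1.1) hAcl
    have hsubI : ∀ n, closure (Sn n) ⊆ Icc (p n) (q n) :=
      fun n => closure_minimal (fun x hx => Ioo_subset_Icc_self hx.2) isClosed_Icc
    have hex : ∀ n, ∃ m : Measure ℝ, m Set.univ ≤ 1 ∧ (∀ x, m {x} = 0) ∧ m Aᶜ = 0 ∧
        m (Iic (-1:ℝ)) = 0 ∧ (good n → m (Icc (p n) (q n))ᶜ = 0 ∧ m Set.univ = 1) := by
      intro n
      by_cases hg : good n
      · obtain ⟨m, hm_univ, hm_K, hm_atom⟩ :=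
          exists_measure_of_perfect (hperf n hg) (hg.2.2.mono subset_closure)
        refine ⟨m, le_of_eq hm_univ, hm_atom, ?_, ?_, fun _ => ⟨?_, hm_univ⟩⟩
        · exact le_antisymm (le_trans (measure_mono (compl_subset_compl.2 (hsubA n)))
            (le_of_eq hm_K)) zero_le
        · refine le_antisymm (le_trans (measure_mono ?_) (le_of_eq hm_K)) zero_le
          intro x hx
          simp only [mem_Iic] at hx
          intro hxK
          have := (hsubI n hxK).1
          linarith [hg.1]
        · exact le_antisymm (le_trans (measure_mono (compl_subset_compl.2 (hsubI n)))
            (le_of_eq hm_K)) zero_le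
      · exact ⟨0, by simp, by simp, by simp, by simp, fun h => absurd h hg⟩
    choose mn hm1 hm2 hm3 hm4 hm5 using hex
    refine ⟨Measure.sum (fun n => ((2:ℝ≥0∞)⁻¹)^n • mn n), ?_, ?_, ?_, ?_, ?_⟩
    · constructor
      rw [Measure.sum_apply _ MeasurableSet.univ]
      calc ∑' n, (((2:ℝ≥0∞)⁻¹)^n • mn n) Set.univ
          ≤ ∑' n : ℕ, ((2:ℝ≥0∞)⁻¹)^n := by
            apply ENNReal.tsum_le_tsum
            intro n
            rw [Measure.smul_apply, smul_eq_mul]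
            calc ((2:ℝ≥0∞)⁻¹)^n * mn n Set.univ ≤ ((2:ℝ≥0∞)⁻¹)^n * 1 := by
                  exact mul_le_mul_right (hm1 n) _
              _ = ((2:ℝ≥0∞)⁻¹)^n := mul_one _
        _ = 2 := by rw [ENNReal.tsum_geometric, ENNReal.one_sub_inv_two, inv_inv]
        _ < ⊤ := by norm_num
    · intro x
      rw [Measure.sum_apply _ (measurableSet_singleton x)]
      simp [hm2]
    · rw [Measure.sum_apply _ hAcl.measurableSet.compl]
      simp [hm3]
    · rw [Measure.sum_apply _ measurableSet_Iic]
      simp [hm4]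
    · intro s t hs ht ⟨a, haIoo, haA⟩
      have ha1 : -1 < a := lt_of_le_of_lt hs haIoo.1
      have ha2 : a < 1 := lt_of_lt_of_le haIoo.2 ht
      obtain ⟨p', hp1', hp2'⟩ := exists_rat_btwn haIoo.1
      obtain ⟨q', hq1', hq2'⟩ := exists_rat_btwn haIoo.2
      obtain ⟨n, hn⟩ := he (p', q')
      have hpn : p n = (p' : ℝ) := by simp only [hp]; rw [hn]
      have hqn : q n = (q' : ℝ) := by simp only [hq]; rw [hn]
      have hgn : good n := by
        refine ⟨by rw [hpn]; linarith, by rw [hqn]; linarith, ⟨a, ⟨haA, P2 a haA ha1 ha2⟩, ?_⟩⟩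
        rw [hpn, hqn]; exact ⟨hp2', hq1'⟩
      have hIcc : Icc (p n) (q n) ⊆ Ioo s t := by
        rw [hpn, hqn]
        intro x hx
        exact ⟨lt_of_lt_of_le hp1' hx.1, lt_of_le_of_lt hx.2 hq2'⟩
      have hmn1 : mn n (Ioo s t) = 1 := by
        have h1 : mn n (Ioo s t)ᶜ = 0 :=
          le_antisymm (le_trans (measure_mono (compl_subset_compl.2 hIcc))
            (le_of_eq (hm5 n hgn).1)) zero_le
        have h2 : (1:ℝ≥0∞) = mn n Set.univ := ((hm5 n hgn).2).symm
        have h3 : mn n Set.univ ≤ mn n (Ioo s t) + mn n (Ioo s t)ᶜ := by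
          rw [← union_compl_self (Ioo s t)] at *
          exact measure_union_le _ _
        rw [h1, add_zero] at h3
        refine le_antisymm ?_ ?_
        · exact le_trans (measure_mono (subset_univ _)) (le_of_eq h2.symm)
        · exact le_trans (le_of_eq h2) h3
      rw [Measure.sum_apply _ measurableSet_Ioo]
      refine lt_of_lt_of_le ?_ (ENNReal.le_tsum n)
      rw [Measure.smul_apply, smul_eq_mul, hmn1, mul_one]
      exact ENNReal.pow_pos (by norm_num) n
  obtain ⟨μ, hμfin, hμs, hμA, hμleft, hμpos⟩ := hμ
  haveI := hμfin
  set ψ : ℝ → ℝ := fun t => (μ (Iic t)).toReal with hψ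
  have hψc : Continuous ψ := cdf_cont μ hμs
  have hψm : Monotone ψ := cdf_mono μ
  have hψm1 : ψ (-1) = 0 := by simp only [hψ, hμleft, ENNReal.toReal_zero]
  set M : ℝ := ψ 1 with hM
  -- strict increase / constancy of ψ across A
  have hψ_zero : ∀ s ∈ A, ∀ t ∈ A, s ≤ t → Ioo s t ∩ A = ∅ → ψ s = ψ t := by
    intro s hs t ht hst hgap
    have h1 : μ (Ioc s t) = 0 := by
      have hsub : Ioc s t ⊆ Aᶜ ∪ {t} := by
        intro w hw
        rcases eq_or_lt_of_le hw.2 with h | h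
        · exact Or.inr (by simp [h])
        · refine Or.inl fun hwA => ?_
          have : w ∈ Ioo s t ∩ A := ⟨⟨hw.1, h⟩, hwA⟩
          rw [hgap] at this; exact this
      refine le_antisymm ?_ zero_le
      calc μ (Ioc s t) ≤ μ (Aᶜ ∪ {t}) := measure_mono hsub
        _ ≤ μ Aᶜ + μ {t} := measure_union_le _ _
        _ = 0 := by rw [hμA, hμs]; simp
    have := cdf_diff μ hst
    rw [h1] at this
    simp only [ENNReal.toReal_zero] at this
    linarith [this]
  have hψ_strict : ∀ s ∈ A, ∀ t ∈ A, s < t → (Ioo s t ∩ A).Nonempty → ψ s < ψ t := by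
    intro s hs t ht hst hn
    have h1 : 0 < μ (Ioc s t) :=
      lt_of_lt_of_le (hμpos s t (hAI hs).1 (hAI ht).2 hn) (measure_mono Ioo_subset_Ioc_self)
    have := cdf_diff μ hst.le
    have h2 : 0 < (μ (Ioc s t)).toReal := ENNReal.toReal_pos h1.ne' (measure_ne_top μ _)
    linarith
  have hM0 : 0 < M := by
    have hnonempty : (Ioo (-1:ℝ) 1 ∩ A).Nonempty := by
      by_contra h
      rw [not_nonempty_iff_eq_empty] at h
      exact hfne (hAgap _ hAm1 _ hAp1 (by norm_num) h)
    have := hψ_strict _ hAm1 _ hAp1 (by norm_num) hnonempty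
    rw [hψm1] at this; exact this
  -- the pseudo-inverse σ
  set T : ℝ → Set ℝ := fun y => Icc (-1:ℝ) 1 ∩ ψ ⁻¹' (Iic y) with hT
  set σ : ℝ → ℝ := fun y => sSup (T y) with hσ
  have hTcpt : ∀ y, IsCompact (T y) :=
    fun y => isCompact_Icc.inter_right (isClosed_Iic.preimage hψc)
  have hTne : ∀ y, 0 ≤ y → ((T y).Nonempty) := fun y hy =>
    ⟨-1, ⟨le_rfl, by norm_num⟩, by simp only [mem_preimage, mem_Iic, hψm1]; exact hy⟩
  have hσT : ∀ y, 0 ≤ y → σ y ∈ T y := fun y hy => (hTcpt y).sSup_mem (hTne y hy)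
  have hσA : ∀ y ∈ Icc 0 M, σ y ∈ A := by
    intro y hy
    by_contra hnA
    obtain ⟨hσI, hσle⟩ := hσT y hy.1
    have hsub : A ∩ Ici (σ y) ⊆ Icc (-1:ℝ) 1 := fun w hw => hAI hw.1
    have hVcpt : IsCompact (A ∩ Ici (σ y)) := hAcpt.inter_right isClosed_Ici
    have hVne : (A ∩ Ici (σ y)).Nonempty := ⟨1, hAp1, hσI.2⟩
    set v : ℝ := sInf (A ∩ Ici (σ y)) with hv
    have hvmem : v ∈ A ∩ Ici (σ y) := hVcpt.sInf_mem hVne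
    have hvgt : σ y < v := lt_of_le_of_ne hvmem.2 (by intro h; rw [h] at hnA; exact hnA hvmem.1)
    have hμ0 : μ (Ioc (σ y) v) = 0 := by
      refine le_antisymm ?_ zero_le
      have hsub2 : Ioc (σ y) v ⊆ Aᶜ ∪ {v} := by
        intro w hw
        rcases eq_or_lt_of_le hw.2 with h | h
        · exact Or.inr (by simp [h])
        · refine Or.inl fun hwA => ?_
          have : v ≤ w := csInf_le hVcpt.bddBelow ⟨hwA, hw.1.le⟩
          linarith
      calc μ (Ioc (σ y) v) ≤ μ (Aᶜ ∪ {v}) := measure_mono hsub2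
        _ ≤ μ Aᶜ + μ {v} := measure_union_le _ _
        _ = 0 := by rw [hμA, hμs]; simp
    have hψv : ψ v = ψ (σ y) := by
      have := cdf_diff μ hvgt.le
      rw [hμ0] at this
      simp only [ENNReal.toReal_zero] at this
      linarith
    have hvT : v ∈ T y := ⟨hAI hvmem.1, by
      simp only [mem_preimage, mem_Iic]
      rw [hψv]
      exact hσle⟩
    have : v ≤ σ y := le_csSup (hTcpt y).bddAbove hvT
    linarith
  have hσψ : ∀ y ∈ Icc 0 M, ψ (σ y) = y := by
    intro y hy
    obtain ⟨hσI, hσle⟩ := hσT y hy.1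
    simp only [mem_preimage, mem_Iic] at hσle
    rcases eq_or_lt_of_le hσle with h | hlt
    · exact h
    exfalso
    have hσ1 : σ y < 1 := by
      rcases eq_or_lt_of_le hσI.2 with h | h
      · exfalso; rw [h] at hlt; exact absurd hy.2 (not_le.2 hlt)
      · exact h
    have hIVT := intermediate_value_Icc hσ1.le (hψc.continuousOn (s := Icc (σ y) 1))
    have hyin : y ∈ Icc (ψ (σ y)) (ψ 1) := ⟨hlt.le, hy.2⟩
    obtain ⟨t, htI, htψ⟩ := hIVT hyin
    have htT : t ∈ T y := ⟨⟨le_trans hσI.1 htI.1, htI.2⟩, by simp [mem_preimage, mem_Iic, htψ.le]⟩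
    have hle : t ≤ σ y := le_csSup (hTcpt y).bddAbove htT
    have := hψm hle
    rw [htψ] at this
    linarith
  -- fibers
  have hK2 : ∀ s ∈ A, ∀ t ∈ A, ψ s = ψ t → f s = f t := by
    intro s hs t ht hst
    rcases lt_trichotomy s t with h | h | h
    · rcases eq_empty_or_nonempty (Ioo s t ∩ A) with hg | hg
      · exact hAgap s hs t ht h hg
      · exact absurd hst (ne_of_lt (hψ_strict s hs t ht h hg))
    · rw [h]
    · rcases eq_empty_or_nonempty (Ioo t s ∩ A) with hg | hg
      · exact (hAgap t ht s hs h hg).symm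
      · exact absurd hst.symm (ne_of_lt (hψ_strict t ht s hs h hg))
  have hK3 : ∀ s ∈ A, ∀ t ∈ A, ψ s ≠ ψ t → f s ≠ f t := by
    intro s hs t ht hpsi hfeq'
    rcases lt_trichotomy s t with h | h | h
    · exact hpsi (hψ_zero s hs t ht h.le (P1 s hs t ht h hfeq'))
    · exact hpsi (by rw [h])
    · exact hpsi (hψ_zero t ht s hs h.le (P1 t ht s hs h hfeq'.symm)).symm
  -- the arc
  set L : ℝ → ℝ := fun x => M * ((cl x) + 1) / 2 with hL
  have hLc : Continuous L := by
    apply Continuous.div_const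
    exact continuous_const.mul (Continuous.add (continuous_const.max (continuous_const.min continuous_id)) continuous_const)
  have hLmem : ∀ x, L x ∈ Icc 0 M := by
    intro x
    have h := hcl_mem x
    constructor
    · have : (0:ℝ) ≤ (cl x + 1) := by linarith [h.1]
      positivity
    · rw [hL]
      simp only
      rw [div_le_iff₀ (by norm_num : (0:ℝ) < 2)]
      nlinarith [h.2, hM0]
  have hLeq : ∀ x ∈ Icc (-1:ℝ) 1, L x = M * (x+1) / 2 := fun x hx => by
    simp only [hL]; rw [hcl_id x hx]
  have hLm1 : L (-1) = 0 := by rw [hLeq _ (by norm_num)]; ring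
  have hLp1 : L 1 = M := by rw [hLeq _ (by norm_num)]; ring
  refine ⟨fun x => f (σ (L x)), ?_, ?_, ?_, ?_⟩
  · -- continuity
    have hcont : Continuous fun x => f (σ (L x)) := by
      apply SeqContinuous.continuous
      intro xs x hxs
      have hys : Tendsto (fun n => L (xs n)) atTop (𝓝 (L x)) :=
        (hLc.continuousAt.tendsto).comp hxs
      set y : ℝ := L x with hy
      have hymem := hLmem x
      show Tendsto (fun n => f (σ (L (xs n)))) atTop (𝓝 (f (σ y)))
      by_contra hnot
      rw [not_tendsto_iff_exists_frequently_notMem] at hnot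
      obtain ⟨s, hs𝓝, hfreq⟩ := hnot
      obtain ⟨φ, hφmono, hφ⟩ := extraction_of_frequently_atTop hfreq
      set ts : ℕ → ℝ := fun k => σ (L (xs (φ k))) with hts
      have htsA : ∀ k, ts k ∈ A := fun k => hσA _ (hLmem _)
      obtain ⟨tstar, htstarA, φ2, hφ2mono, hφ2tend⟩ := hAcpt.tendsto_subseq htsA
      have hψtend : Tendsto (fun k => ψ ((ts ∘ φ2) k)) atTop (𝓝 (ψ tstar)) :=
        (hψc.continuousAt.tendsto).comp hφ2tend
      have hψeq : ∀ k, ψ (ts (φ2 k)) = L (xs (φ (φ2 k))) := fun k => hσψ _ (hLmem _)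
      have hytend : Tendsto (fun k => L (xs (φ (φ2 k)))) atTop (𝓝 y) :=
        hys.comp ((hφmono.comp hφ2mono).tendsto_atTop)
      have hψstar : ψ tstar = y := by
        refine tendsto_nhds_unique ?_ hytend
        have : (fun k => ψ ((ts ∘ φ2) k)) = fun k => L (xs (φ (φ2 k))) := by
          funext k
          exact hψeq k
        rwa [this] at hψtend
      have hfeq2 : f tstar = f (σ y) :=
        hK2 _ htstarA _ (hσA _ hymem) (by rw [hψstar, hσψ _ hymem])
      have hftend : Tendsto (fun k => f ((ts ∘ φ2) k)) atTop (𝓝 (f (σ y))) := by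
        rw [← hfeq2]
        exact (hfc.continuousAt.tendsto).comp hφ2tend
      have hev : ∀ᶠ k in atTop, f ((ts ∘ φ2) k) ∈ s := hftend hs𝓝
      obtain ⟨k, hk⟩ := hev.exists
      exact hφ (φ2 k) hk
    exact hcont.continuousOn
  · -- injectivity
    intro x1 hx1 x2 hx2 heq
    by_contra hne12
    have hLne : L x1 ≠ L x2 := by
      rw [hLeq _ hx1, hLeq _ hx2]
      intro h
      apply hne12
      field_simp at h
      linarith
    have h1 := hσA _ (hLmem x1)
    have h2 := hσA _ (hLmem x2)
    have hψne : ψ (σ (L x1)) ≠ ψ (σ (L x2)) := by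
      rw [hσψ _ (hLmem x1), hσψ _ (hLmem x2)]; exact hLne
    exact hK3 _ h1 _ h2 hψne heq
  · -- j (-1) = G (-1)
    show f (σ (L (-1))) = G (-1)
    rw [hLm1]
    have h1 := hσA 0 ⟨le_rfl, hM0.le⟩
    have h2 : ψ (σ 0) = ψ (-1) := by rw [hσψ 0 ⟨le_rfl, hM0.le⟩, hψm1]
    rw [hK2 _ h1 _ hAm1 h2, hfm1]
  · -- j 1 = G 1
    show f (σ (L 1)) = G 1
    rw [hLp1]
    have h1 := hσA M ⟨hM0.le, le_rfl⟩
    have h2 : ψ (σ M) = ψ 1 := by rw [hσψ M ⟨hM0.le, le_rfl⟩]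
    rw [hK2 _ h1 _ hAp1 h2, hfp1]
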